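/- Connection formula between little q-Laguerre/Wall polynomials: p_n(x; a | q) = ∑_{m=0}^{n} (αq)^{n−m} [n choose m]_q ((α q;q)_m / (a q;q)_n) ((a/α); q)_{n−m} · p_m(x; α | q), where p_n(x; a | q) = {}_2φ_1(q^{−n}, 0; aq; q; qx) = ∑_{j=0}^{n} ((q^{−n};q)_j / ((aq;q)_j (q;q)_j)) (qx)^j. -/

import Mathlib

open Finset

/-- q-shifted factorial. -/
noncomputable def qPoch (a q : ℂ) (n : ℕ) : ℂ :=
  ∏ k ∈ Finset.range n, (1 - a * q ^ k)

/-- Gaussian (q-binomial) coefficient. -/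
noncomputable def qBinom (q : ℂ) (n k : ℕ) : ℂ :=
  qPoch q q n / (qPoch q q k * qPoch q q (n - k))

/-- Little q-Laguerre/Wall polynomial
`p_n(x;a|q) = {}_2φ_1(q^{−n},0;aq;q;qx) = ∑_j ((q^{−n};q)_j/((aq;q)_j (q;q)_j))(qx)^j`. -/
noncomputable def littleQLaguerre (q a x : ℂ) (n : ℕ) : ℂ :=
  ∑ j ∈ Finset.range (n + 1),
    qPoch ((q ^ n)⁻¹) q j / (qPoch (a * q) q j * qPoch q q j) * (q * x) ^ j

lemma qPoch_add (c q : ℂ) (s t : ℕ) :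
    qPoch c q (s + t) = qPoch c q s * qPoch (c * q ^ s) q t := by
  unfold qPoch
  rw [Finset.prod_range_add]
  congr 1
  exact Finset.prod_congr rfl fun i _ => by rw [pow_add]; ring

lemma qPoch_succ (c q : ℂ) (t : ℕ) :
    qPoch c q (t + 1) = qPoch c q t * (1 - c * q ^ t) := by
  unfold qPoch; rw [Finset.prod_range_succ]

lemma qPoch_zero (c q : ℂ) : qPoch c q 0 = 1 := by simp [qPoch]

lemma qPoch_inv_mul (q : ℂ) (hq : q ≠ 0) (s j : ℕ) :
    qPoch ((q ^ (s + j))⁻¹) q j * q ^ ((s + j) * j) =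
      (∏ i ∈ range j, -(q ^ i)) * qPoch (q * q ^ s) q j := by
  unfold qPoch
  calc (∏ k ∈ range j, (1 - (q ^ (s + j))⁻¹ * q ^ k)) * q ^ ((s + j) * j)
      = ∏ k ∈ range j, ((1 - (q ^ (s + j))⁻¹ * q ^ k) * q ^ (s + j)) := by
        rw [Finset.prod_mul_distrib, Finset.prod_const, Finset.card_range, ← pow_mul]
    _ = ∏ k ∈ range j, (q ^ (s + j) - q ^ k) := by
        refine Finset.prod_congr rfl fun i _ => ?_
        have h0 := pow_ne_zero (s + j) hq
        field_simp
    _ = ∏ k ∈ range j, (q ^ (s + j) - q ^ (j - 1 - k)) := by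
        rw [Finset.prod_range_reflect (fun i => q ^ (s + j) - q ^ i) j]
    _ = ∏ k ∈ range j, (-(q ^ (j - 1 - k)) * (1 - q * q ^ s * q ^ k)) := by
        refine Finset.prod_congr rfl fun i hi => ?_
        have hij : i < j := mem_range.mp hi
        have hexp : q ^ (j - 1 - i) * (q * (q ^ s * q ^ i)) = q ^ (s + j) := by
          rw [← pow_add, ← pow_succ', ← pow_add]
          congr 1
          omega
        calc q ^ (s + j) - q ^ (j - 1 - i)
            = q ^ (j - 1 - i) * (q * (q ^ s * q ^ i)) - q ^ (j - 1 - i) := by rw [hexp]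
          _ = -(q ^ (j - 1 - i)) * (1 - q * q ^ s * q ^ i) := by ring
    _ = (∏ i ∈ range j, -(q ^ i)) * ∏ k ∈ range j, (1 - q * q ^ s * q ^ k) := by
        rw [Finset.prod_mul_distrib, Finset.prod_range_reflect (fun i => -(q ^ i)) j]

lemma qPoch_inv_zero (q : ℂ) (hq : q ≠ 0) {m j : ℕ} (h : m < j) :
    qPoch ((q ^ m)⁻¹) q j = 0 := by
  unfold qPoch
  refine Finset.prod_eq_zero (Finset.mem_range.mpr h) ?_
  rw [inv_mul_cancel₀ (pow_ne_zero m hq)]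
  ring

noncomputable def gauss (q : ℂ) : ℕ → ℕ → ℂ
  | _, 0 => 1
  | 0, _ + 1 => 0
  | n + 1, k + 1 => gauss q n (k + 1) + q ^ (n - k) * gauss q n k

lemma gauss_zero (q : ℂ) (n : ℕ) : gauss q n 0 = 1 := by
  cases n <;> rfl

lemma gauss_of_lt (q : ℂ) : ∀ {n k : ℕ}, n < k → gauss q n k = 0 := by
  intro n
  induction n with
  | zero => intro k hk; match k, hk with | k + 1, _ => rfl
  | succ n ih =>
    intro k hk
    match k, hk with
    | k + 1, hk =>
      show gauss q n (k + 1) + q ^ (n - k) * gauss q n k = 0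
      rw [ih (by omega), ih (by omega)]
      ring

lemma gauss_self (q : ℂ) : ∀ n, gauss q n n = 1 := by
  intro n
  induction n with
  | zero => rfl
  | succ n ih =>
    show gauss q n (n + 1) + q ^ (n - n) * gauss q n n = 1
    rw [gauss_of_lt q (by omega), ih]
    simp

lemma gauss_mul (q : ℂ) : ∀ n k, k ≤ n →
    gauss q n k * (qPoch q q k * qPoch q q (n - k)) = qPoch q q n := by
  intro n
  induction n with
  | zero =>
    intro k hk
    interval_cases k
    simp [gauss_zero, qPoch_zero]
  | succ n ih =>
    intro k hk
    match k with
    | 0 => simp [gauss_zero, qPoch_zero]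
    | k + 1 =>
      show (gauss q n (k + 1) + q ^ (n - k) * gauss q n k) *
        (qPoch q q (k + 1) * qPoch q q (n + 1 - (k + 1))) = qPoch q q (n + 1)
      rcases Nat.lt_or_ge (k + 1) (n + 1) with hlt | hge
      · have hk1n : k + 1 ≤ n := by omega
        have h1 := ih (k + 1) hk1n
        have h2 := ih k (by omega)
        have e1 : n + 1 - (k + 1) = (n - k - 1) + 1 := by omega
        have e2 : n - k = (n - k - 1) + 1 := by omega
        have e3 : n - (k + 1) = n - k - 1 := by omega
        rw [e3, qPoch_succ q q k] at h1
        rw [e2, qPoch_succ] at h2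
        have hq1 : q * q ^ (n - k - 1) = q ^ (n - k) := by
          rw [← pow_succ']; congr 1; omega
        have hq2 : q ^ (n - k) * (q * q ^ k) = q * q ^ n := by
          rw [← pow_succ', ← pow_add, ← pow_succ']
          congr 1; omega
        rw [e1, qPoch_succ q q k, qPoch_succ q q (n - k - 1), qPoch_succ q q n]
        linear_combination (1 - q * q ^ (n - k - 1)) * h1 + q ^ (n - k) * (1 - q * q ^ k) * h2
          - qPoch q q n * hq1 - qPoch q q n * hq2
      · have hkn : k = n := by omega
        subst hkn
        rw [gauss_of_lt q (by omega), gauss_self]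
        simp only [Nat.sub_self, Nat.add_sub_cancel, qPoch_zero, pow_zero]
        rw [qPoch_succ]
        ring

lemma key (q A B : ℂ) : ∀ N, (∑ k ∈ range (N + 1),
    gauss q N k * (∏ i ∈ range k, (B - A * q ^ i)) * (∏ i ∈ range (N - k), (1 - B * q ^ i)))
    = qPoch A q N := by
  intro N
  induction N with
  | zero => simp [gauss_zero, qPoch_zero]
  | succ N ih =>
    rw [Finset.sum_range_succ' (fun k => gauss q (N + 1) k * (∏ i ∈ range k, (B - A * q ^ i)) *
      (∏ i ∈ range (N + 1 - k), (1 - B * q ^ i))) (N + 1)]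
    simp only [Nat.add_sub_add_right, Nat.sub_zero, gauss_zero, Finset.prod_range_zero, mul_one, one_mul]
    have hsplit : ∀ k ∈ range (N + 1),
        gauss q (N + 1) (k + 1) * (∏ i ∈ range (k + 1), (B - A * q ^ i)) *
          (∏ i ∈ range (N - k), (1 - B * q ^ i))
        = gauss q N (k + 1) * (∏ i ∈ range (k + 1), (B - A * q ^ i)) *
            (∏ i ∈ range (N - k), (1 - B * q ^ i))
          + q ^ (N - k) * (gauss q N k * (∏ i ∈ range k, (B - A * q ^ i)) *
            (∏ i ∈ range (N - k), (1 - B * q ^ i))) * (B - A * q ^ k) := by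
      intro k hk
      show (gauss q N (k + 1) + q ^ (N - k) * gauss q N k) * _ * _ = _
      rw [Finset.prod_range_succ]
      ring
    rw [Finset.sum_congr rfl hsplit, Finset.sum_add_distrib]
    have hW : ∑ k ∈ range (N + 1), gauss q N (k + 1) * (∏ i ∈ range (k + 1), (B - A * q ^ i)) *
          (∏ i ∈ range (N - k), (1 - B * q ^ i))
        + (∏ i ∈ range (N + 1), (1 - B * q ^ i))
        = ∑ k ∈ range (N + 1), gauss q N k * (∏ i ∈ range k, (B - A * q ^ i)) *
          (∏ i ∈ range (N + 1 - k), (1 - B * q ^ i)) := by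
      have h1 := Finset.sum_range_succ' (fun k => gauss q N k * (∏ i ∈ range k, (B - A * q ^ i)) *
          (∏ i ∈ range (N + 1 - k), (1 - B * q ^ i))) (N + 1)
      simp only [Nat.add_sub_add_right, Nat.sub_zero, gauss_zero, Finset.prod_range_zero,
        mul_one, one_mul] at h1
      rw [← h1, Finset.sum_range_succ, gauss_of_lt q (by omega)]
      simp
    rw [add_right_comm, hW, ← Finset.sum_add_distrib]
    have hcomb : ∀ k ∈ range (N + 1),
        gauss q N k * (∏ i ∈ range k, (B - A * q ^ i)) * (∏ i ∈ range (N + 1 - k), (1 - B * q ^ i))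
          + q ^ (N - k) * (gauss q N k * (∏ i ∈ range k, (B - A * q ^ i)) *
            (∏ i ∈ range (N - k), (1 - B * q ^ i))) * (B - A * q ^ k)
        = gauss q N k * (∏ i ∈ range k, (B - A * q ^ i)) *
            (∏ i ∈ range (N - k), (1 - B * q ^ i)) * (1 - A * q ^ N) := by
      intro k hk
      have hkN : k ≤ N := by have := mem_range.mp hk; omega
      have e1 : N + 1 - k = (N - k) + 1 := by omega
      have hpow : q ^ (N - k) * q ^ k = q ^ N := by rw [← pow_add]; congr 1; omega
      rw [e1, Finset.prod_range_succ]
      calc gauss q N k * (∏ i ∈ range k, (B - A * q ^ i)) *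
            ((∏ i ∈ range (N - k), (1 - B * q ^ i)) * (1 - B * q ^ (N - k)))
          + q ^ (N - k) * (gauss q N k * (∏ i ∈ range k, (B - A * q ^ i)) *
            (∏ i ∈ range (N - k), (1 - B * q ^ i))) * (B - A * q ^ k)
          = gauss q N k * (∏ i ∈ range k, (B - A * q ^ i)) *
            (∏ i ∈ range (N - k), (1 - B * q ^ i)) * (1 - A * (q ^ (N - k) * q ^ k)) := by ring
        _ = _ := by rw [hpow]
    rw [Finset.sum_congr rfl hcomb, ← Finset.sum_mul, ih, qPoch_succ]

set_option maxHeartbeats 1000000 in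
/-- connection formula between little q-Laguerre/Wall polynomials:
`p_n(x;a|q) = ∑_m (αq)^{n−m} [n choose m]_q ((αq;q)_m/(aq;q)_n) (a/α;q)_{n−m} p_m(x;α|q)`. -/
theorem littleQLaguerre_connection (q a α : ℂ) (n : ℕ)
    (hq0 : q ≠ 0) (hq1 : ∀ j, 1 ≤ j → j ≤ n → q ^ j ≠ 1)
    (ha : qPoch (a * q) q n ≠ 0) (hα : qPoch (α * q) q n ≠ 0) (hα0 : α ≠ 0) (x : ℂ) :
    littleQLaguerre q a x n = ∑ m ∈ Finset.range (n + 1),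
      (α * q) ^ (n - m) * qBinom q n m * (qPoch (α * q) q m / qPoch (a * q) q n) *
        qPoch (a / α) q (n - m) * littleQLaguerre q α x m := by
  have hF : ∀ t, t ≤ n → qPoch q q t ≠ 0 := by
    intro t ht
    unfold qPoch
    rw [Finset.prod_ne_zero_iff]
    intro i hi
    have hi' : i < t := mem_range.mp hi
    have h := hq1 (i + 1) (by omega) (by omega)
    intro hc
    apply h
    rw [pow_succ']
    exact (sub_eq_zero.mp hc).symm
  have hPa : ∀ t, t ≤ n → qPoch (a * q) q t ≠ 0 := by
    intro t ht
    obtain ⟨s, rfl⟩ : ∃ s, n = t + s := ⟨n - t, by omega⟩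
    rw [qPoch_add] at ha
    exact left_ne_zero_of_mul ha
  have hPα : ∀ t, t ≤ n → qPoch (α * q) q t ≠ 0 := by
    intro t ht
    obtain ⟨s, rfl⟩ : ∃ s, n = t + s := ⟨n - t, by omega⟩
    rw [qPoch_add] at hα
    exact left_ne_zero_of_mul hα
  have hcoef : ∀ j, j ≤ n →
      qPoch ((q ^ n)⁻¹) q j / (qPoch (a * q) q j * qPoch q q j)
      = ∑ m ∈ range (n + 1), ((α * q) ^ (n - m) * qBinom q n m *
          (qPoch (α * q) q m / qPoch (a * q) q n) * qPoch (a / α) q (n - m)) *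
          (qPoch ((q ^ m)⁻¹) q j / (qPoch (α * q) q j * qPoch q q j)) := by
    intro j hj
    obtain ⟨N, rfl⟩ : ∃ N, n = j + N := ⟨n - j, by omega⟩
    rw [show j + N + 1 = j + (N + 1) from by omega,
      Finset.sum_range_add (fun m => ((α * q) ^ (j + N - m) * qBinom q (j + N) m *
        (qPoch (α * q) q m / qPoch (a * q) q (j + N)) * qPoch (a / α) q (j + N - m)) *
        (qPoch ((q ^ m)⁻¹) q j / (qPoch (α * q) q j * qPoch q q j))) j (N + 1)]
    have hzero : ∀ m ∈ range j, ((α * q) ^ (j + N - m) * qBinom q (j + N) m *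
        (qPoch (α * q) q m / qPoch (a * q) q (j + N)) * qPoch (a / α) q (j + N - m)) *
        (qPoch ((q ^ m)⁻¹) q j / (qPoch (α * q) q j * qPoch q q j)) = 0 := by
      intro m hm
      rw [qPoch_inv_zero q hq0 (mem_range.mp hm)]
      simp
    rw [Finset.sum_eq_zero hzero, zero_add]
    rw [← Finset.sum_range_reflect]
    simp only [Nat.add_sub_cancel]
    have hterm : ∀ k ∈ range (N + 1),
        ((α * q) ^ (j + N - (j + (N - k))) * qBinom q (j + N) (j + (N - k)) *
          (qPoch (α * q) q (j + (N - k)) / qPoch (a * q) q (j + N)) *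
          qPoch (a / α) q (j + N - (j + (N - k)))) *
          (qPoch ((q ^ (j + (N - k)))⁻¹) q j / (qPoch (α * q) q j * qPoch q q j))
        = gauss q N k * (∏ i ∈ range k, (α * q * q ^ j - a * q * q ^ j * q ^ i)) *
            (∏ i ∈ range (N - k), (1 - α * q * q ^ j * q ^ i)) *
            (qPoch ((q ^ (j + N))⁻¹) q j /
              (qPoch (a * q) q j * qPoch q q j * qPoch (a * q * q ^ j) q N)) := by
      intro k hk
      have hkN : k ≤ N := by have := mem_range.mp hk; omega
      obtain ⟨d, rfl⟩ : ∃ d, N = k + d := ⟨N - k, by omega⟩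
      rw [show k + d - k = d from by omega]
      rw [show j + (k + d) - (j + d) = k from by omega]
      simp only [qBinom]
      rw [show j + (k + d) - (j + d) = k from by omega]
      -- atomic facts
      have hFk : qPoch q q k ≠ 0 := hF k (by omega)
      have hFd : qPoch q q d ≠ 0 := hF d (by omega)
      have hFkd : qPoch q q (k + d) ≠ 0 := hF (k + d) (by omega)
      have hFj : qPoch q q j ≠ 0 := hF j (by omega)
      have hPaj : qPoch (a * q) q j ≠ 0 := hPa j (by omega)
      have hPαj : qPoch (α * q) q j ≠ 0 := hPα j (by omega)
      have e1 : qPoch q q (j + (k + d)) = qPoch q q (k + d) * qPoch (q * q ^ (k + d)) q j := by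
        rw [add_comm j (k + d), qPoch_add]
      have e2 : qPoch q q (j + d) = qPoch q q d * qPoch (q * q ^ d) q j := by
        rw [add_comm j d, qPoch_add]
      have e3 : qPoch (α * q) q (j + d) = qPoch (α * q) q j * qPoch (α * q * q ^ j) q d :=
        qPoch_add (α * q) q j d
      have e4 : qPoch (a * q) q (j + (k + d)) =
          qPoch (a * q) q j * qPoch (a * q * q ^ j) q (k + d) :=
        qPoch_add (a * q) q j (k + d)
      have hQA : qPoch (a * q * q ^ j) q (k + d) ≠ 0 := by
        have := ha; rw [e4] at this; exact right_ne_zero_of_mul this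
      have hT1 : qPoch (q * q ^ (k + d)) q j ≠ 0 := by
        have := hF (j + (k + d)) le_rfl; rw [e1] at this; exact right_ne_zero_of_mul this
      have hT2 : qPoch (q * q ^ d) q j ≠ 0 := by
        have := hF (j + d) (by omega); rw [e2] at this; exact right_ne_zero_of_mul this
      have e5 : qPoch ((q ^ (j + d))⁻¹) q j =
          (∏ i ∈ range j, -(q ^ i)) * qPoch (q * q ^ d) q j / q ^ ((d + j) * j) := by
        rw [add_comm j d, eq_div_iff (pow_ne_zero _ hq0)]
        exact qPoch_inv_mul q hq0 d j
      have e6 : qPoch ((q ^ (j + (k + d)))⁻¹) q j =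
          (∏ i ∈ range j, -(q ^ i)) * qPoch (q * q ^ (k + d)) q j / q ^ ((k + d + j) * j) := by
        rw [add_comm j (k + d), eq_div_iff (pow_ne_zero _ hq0)]
        exact qPoch_inv_mul q hq0 (k + d) j
      have e7 : (∏ i ∈ range k, (α * q * q ^ j - a * q * q ^ j * q ^ i)) =
          (α * q * q ^ j) ^ k * qPoch (a / α) q k := by
        calc (∏ i ∈ range k, (α * q * q ^ j - a * q * q ^ j * q ^ i))
            = ∏ i ∈ range k, ((α * q * q ^ j) * (1 - a / α * q ^ i)) := by
              refine Finset.prod_congr rfl fun i _ => ?_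
              field_simp
          _ = (α * q * q ^ j) ^ k * ∏ i ∈ range k, (1 - a / α * q ^ i) := by
              rw [Finset.prod_mul_distrib, Finset.prod_const, Finset.card_range]
          _ = (α * q * q ^ j) ^ k * qPoch (a / α) q k := rfl
      have e8 : (∏ i ∈ range d, (1 - α * q * q ^ j * q ^ i)) = qPoch (α * q * q ^ j) q d := rfl
      have e9 : gauss q (k + d) k =
          qPoch q q (k + d) / (qPoch q q k * qPoch q q d) := by
        rw [eq_div_iff (mul_ne_zero hFk hFd)]
        have h := gauss_mul q (k + d) k (by omega)
        rwa [show k + d - k = d from by omega] at h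
      rw [e9, e7, e8, e1, e2, e3, e4, e5, e6]
      have hqp : ∀ e : ℕ, (q : ℂ) ^ e ≠ 0 := fun e => pow_ne_zero e hq0
      have hPaj' : qPoch (q * a) q j ≠ 0 := by rwa [mul_comm q a]
      have hQA' : qPoch (q * q ^ j * a) q (k + d) ≠ 0 := by
        rwa [show (q : ℂ) * q ^ j * a = a * q * q ^ j from by ring]
      have hT1' : qPoch (q * q ^ k * q ^ d) q j ≠ 0 := by
        rwa [show (q : ℂ) * q ^ k * q ^ d = q * q ^ (k + d) from by rw [pow_add]; ring]
      field_simp [hFk, hFd, hFkd, hFj, hPaj, hPαj, hQA, hT1, hT2, hqp, hα0, hPaj', hQA', hT1']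
      ring
    rw [Finset.sum_congr rfl hterm, ← Finset.sum_mul,
      key q (a * q * q ^ j) (α * q * q ^ j) N]
    have hQA : qPoch (a * q * q ^ j) q N ≠ 0 := by
      have := ha; rw [qPoch_add (a * q) q j N] at this; exact right_ne_zero_of_mul this
    have hfin : qPoch (a * q * q ^ j) q N *
        (qPoch ((q ^ (j + N))⁻¹) q j /
          (qPoch (a * q) q j * qPoch q q j * qPoch (a * q * q ^ j) q N))
        = qPoch ((q ^ (j + N))⁻¹) q j / (qPoch (a * q) q j * qPoch q q j) := by
      rw [mul_comm, div_mul_eq_mul_div]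
      exact mul_div_mul_right _ _ hQA
    rw [hfin]
  -- main assembly
  simp only [littleQLaguerre]
  have hswap1 : ∀ m ∈ range (n + 1),
      (α * q) ^ (n - m) * qBinom q n m * (qPoch (α * q) q m / qPoch (a * q) q n) *
        qPoch (a / α) q (n - m) *
        ∑ j ∈ range (m + 1), qPoch ((q ^ m)⁻¹) q j / (qPoch (α * q) q j * qPoch q q j) * (q * x) ^ j
      = ∑ j ∈ range (n + 1), (α * q) ^ (n - m) * qBinom q n m *
          (qPoch (α * q) q m / qPoch (a * q) q n) * qPoch (a / α) q (n - m) *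
          (qPoch ((q ^ m)⁻¹) q j / (qPoch (α * q) q j * qPoch q q j) * (q * x) ^ j) := by
    intro m hm
    rw [Finset.mul_sum]
    apply Finset.sum_subset (Finset.range_subset_range.mpr (by have := mem_range.mp hm; omega))
    intro j _ hjm
    have hmj : m < j := by
      rcases Nat.lt_or_ge m j with h | h
      · exact h
      · exact absurd (mem_range.mpr (by omega)) hjm
    rw [qPoch_inv_zero q hq0 hmj]
    simp
  rw [Finset.sum_congr rfl hswap1, Finset.sum_comm]
  refine Finset.sum_congr rfl fun j hj => ?_
  have hj' : j ≤ n := by have := mem_range.mp hj; omega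
  have hre : ∀ m ∈ range (n + 1),
      (α * q) ^ (n - m) * qBinom q n m * (qPoch (α * q) q m / qPoch (a * q) q n) *
        qPoch (a / α) q (n - m) *
        (qPoch ((q ^ m)⁻¹) q j / (qPoch (α * q) q j * qPoch q q j) * (q * x) ^ j)
      = ((α * q) ^ (n - m) * qBinom q n m * (qPoch (α * q) q m / qPoch (a * q) q n) *
          qPoch (a / α) q (n - m) *
          (qPoch ((q ^ m)⁻¹) q j / (qPoch (α * q) q j * qPoch q q j))) * (q * x) ^ j := by
    intro m _; ring
  rw [Finset.sum_congr rfl hre, ← Finset.sum_mul, ← hcoef j hj']
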